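/- Let r ≥ 1 be a natural number, let α_1, …, α_r be positive real numbers, and let H_1, …, H_r : ℝ → ℝ be differentiable functions such that: (i) for every i with 1 ≤ i ≤ r-1 and every t ≥ 0, H_i'(t) = H_{i+1}(t) - α_i·H_i(t); (ii) for every t ≥ 0, H_r'(t) ≥ -α_r·H_r(t); and (iii) H_i(0) ≥ 0 for every 1 ≤ i ≤ r. Then H_i(t) ≥ 0 for every 1 ≤ i ≤ r and every t ≥ 0. -/

import Mathlib

lemma key_gronwall (a : ℝ) (f : ℝ → ℝ) (hf : Differentiable ℝ f)
    (h0 : 0 ≤ f 0) (hd : ∀ t ≥ (0:ℝ), deriv f t ≥ -a * f t) :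
    ∀ t ≥ (0:ℝ), 0 ≤ f t := by
  set φ : ℝ → ℝ := fun t => Real.exp (a * t) * f t with hφ
  have hed : Differentiable ℝ fun t : ℝ => Real.exp (a * t) :=
    (Real.differentiable_exp.comp (differentiable_id.const_mul a))
  have hφd : Differentiable ℝ φ := hed.mul hf
  have hderiv : ∀ t : ℝ, deriv φ t =
      a * Real.exp (a * t) * f t + Real.exp (a * t) * deriv f t := by
    intro t
    have h1 : HasDerivAt (fun t : ℝ => Real.exp (a * t)) (a * Real.exp (a * t)) t := by
      have := (Real.hasDerivAt_exp (a * t)).comp t ((hasDerivAt_id t).const_mul a)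
      exact this.congr_deriv (by ring)
    have h2 : HasDerivAt f (deriv f t) t := (hf t).hasDerivAt
    exact (h1.mul h2).deriv
  have hmono : MonotoneOn φ (Set.Ici (0:ℝ)) := by
    apply monotoneOn_of_deriv_nonneg (convex_Ici 0) hφd.continuous.continuousOn
      (fun t _ => (hφd t).differentiableWithinAt)
    intro t ht
    rw [interior_Ici] at ht
    rw [hderiv t]
    have hle := hd t (le_of_lt ht)
    nlinarith [Real.exp_pos (a * t)]
  intro t ht
  have := hmono (Set.self_mem_Ici) (Set.mem_Ici.2 ht) ht
  have h0' : (0:ℝ) ≤ φ 0 := by simpa [hφ] using h0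
  have : 0 ≤ Real.exp (a * t) * f t := le_trans h0' this
  nlinarith [Real.exp_pos (a * t)]

/-- Proposition 1 of the paper. The cascade of high-order CBF comparison
inequalities propagates nonnegativity of all `H_i` forward in time. -/
theorem cascade_nonneg
    (r : ℕ) (hr : 1 ≤ r) (α : ℕ → ℝ) (hα : ∀ i, 1 ≤ i → i ≤ r → 0 < α i)
    (H : ℕ → ℝ → ℝ) (hdiff : ∀ i, 1 ≤ i → i ≤ r → Differentiable ℝ (H i))
    (hcasc : ∀ i, 1 ≤ i → i ≤ r - 1 → ∀ t ≥ (0:ℝ),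
      deriv (H i) t = H (i + 1) t - α i * H i t)
    (hlast : ∀ t ≥ (0:ℝ), deriv (H r) t ≥ -α r * H r t)
    (h0 : ∀ i, 1 ≤ i → i ≤ r → 0 ≤ H i 0) :
    ∀ i, 1 ≤ i → i ≤ r → ∀ t ≥ (0:ℝ), 0 ≤ H i t := by
  suffices h : ∀ d i, 1 ≤ i → i ≤ r → r - i ≤ d → ∀ t ≥ (0:ℝ), 0 ≤ H i t by
    intro i h1 h2
    exact h (r - i) i h1 h2 le_rfl
  intro d
  induction d with
  | zero =>
    intro i h1 h2 hd
    have hieq : i = r := by omega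
    rw [hieq]
    exact key_gronwall (α r) (H r) (hdiff r hr le_rfl) (h0 r hr le_rfl) hlast
  | succ d ih =>
    intro i h1 h2 hd
    by_cases hir : i = r
    · rw [hir]
      exact key_gronwall (α r) (H r) (hdiff r hr le_rfl) (h0 r hr le_rfl) hlast
    · have hlt : i ≤ r - 1 := by omega
      have hnext := ih (i + 1) (by omega) (by omega) (by omega)
      apply key_gronwall (α i) (H i) (hdiff i h1 h2) (h0 i h1 h2)
      intro t ht
      rw [hcasc i h1 hlt t ht]
      have := hnext t ht
      linarith
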